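/- Let C be a balanced braided monoidal category, i.e. a braided category with braiding c and a natural automorphism θ (the balancing) satisfying θ_I = id_I and θ_{X⊗Y} = c_{Y,X} ∘ c_{X,Y} ∘ (θ_X ⊗ θ_Y). Let F be an object with a commutative multiplication μ : F ⊗ F → F (i.e. μ ∘ c_{F,F} = μ), a unit η : I → F, and an invariant non-degenerate pairing β : F ⊗ F → I satisfying β ∘ (θ_F ⊗ id_F) = β ∘ (id_F ⊗ θ_F) = β ∘ θ_{F⊗F} composed appropriately, such that (F, μ, η, β) is a symmetric Frobenius algebra compatible with the balancing. Then θ_F = id_F. -/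

import Mathlib

open CategoryTheory MonoidalCategory

/-- In a balanced braided monoidal category, the balancing is automatically trivial on a
symmetric commutative Frobenius algebra: `θ_F = id_F`. -/
theorem balancing_trivial_on_symmetric_commutative_frobenius
    {C : Type*} [Category C] [MonoidalCategory C] [BraidedCategory C]
    (θ : ∀ X : C, X ⟶ X) [∀ X : C, IsIso (θ X)]
    (θnat : ∀ {X Y : C} (f : X ⟶ Y), f ≫ θ Y = θ X ≫ f)
    (θunit : θ (𝟙_ C) = 𝟙 (𝟙_ C))
    (θtensor : ∀ X Y : C, θ (X ⊗ Y) = (θ X ⊗ₘ θ Y) ≫ (β_ X Y).hom ≫ (β_ Y X).hom)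
    (F : C) (μ : F ⊗ F ⟶ F) (η : 𝟙_ C ⟶ F)
    (massoc : (μ ▷ F) ≫ μ = (α_ F F F).hom ≫ (F ◁ μ) ≫ μ)
    (mlunit : (η ▷ F) ≫ μ = (λ_ F).hom)
    (mrunit : (F ◁ η) ≫ μ = (ρ_ F).hom)
    (mcomm : (β_ F F).hom ≫ μ = μ)
    (bet : F ⊗ F ⟶ 𝟙_ C)
    (binv : (μ ▷ F) ≫ bet = (α_ F F F).hom ≫ (F ◁ μ) ≫ bet)
    (δ : 𝟙_ C ⟶ F ⊗ F)
    (z1 : (λ_ F).inv ≫ (δ ▷ F) ≫ (α_ F F F).hom ≫ (F ◁ bet) ≫ (ρ_ F).hom = 𝟙 F)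
    (z2 : (ρ_ F).inv ≫ (F ◁ δ) ≫ (α_ F F F).inv ≫ (bet ▷ F) ≫ (λ_ F).hom = 𝟙 F)
    (bbal : (θ F ▷ F) ≫ bet = (F ◁ θ F) ≫ bet)
    (bsym : (θ F ▷ F) ≫ (β_ F F).hom ≫ bet = bet) :
    θ F = 𝟙 F := by
  -- the counit
  set ε : F ⟶ 𝟙_ C := (ρ_ F).inv ≫ (F ◁ η) ≫ bet with hε
  -- Step 1: bet = μ ≫ ε
  have hbet : μ ≫ ε = bet := by
    calc μ ≫ ε = (ρ_ (F ⊗ F)).inv ≫ (μ ▷ 𝟙_ C) ≫ (F ◁ η) ≫ bet := by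
          rw [hε, ← Category.assoc, rightUnitor_inv_naturality, Category.assoc]
      _ = (ρ_ (F ⊗ F)).inv ≫ ((F ⊗ F) ◁ η) ≫ (μ ▷ F) ≫ bet := by
          rw [← Category.assoc (μ ▷ 𝟙_ C), ← whisker_exchange, Category.assoc]
      _ = (ρ_ (F ⊗ F)).inv ≫ ((F ⊗ F) ◁ η) ≫ (α_ F F F).hom ≫ (F ◁ μ) ≫ bet := by
          rw [binv]
      _ = (ρ_ (F ⊗ F)).inv ≫ (α_ F F (𝟙_ C)).hom ≫ (F ◁ (F ◁ η)) ≫ (F ◁ μ) ≫ bet := by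
          rw [associator_naturality_right_assoc]
      _ = (F ◁ (ρ_ F).inv) ≫ (F ◁ ((F ◁ η) ≫ μ)) ≫ bet := by
          rw [whiskerLeft_rightUnitor_inv, MonoidalCategory.whiskerLeft_comp]
          simp
      _ = bet := by
          rw [mrunit]
          simp
  -- Step 2: the pairing is braiding-invariant
  have hbraid : (β_ F F).hom ≫ bet = bet := by
    rw [← hbet, ← Category.assoc, mcomm]
  -- Step 3: (θ F ▷ F) ≫ bet = bet
  have key : (θ F ▷ F) ≫ bet = bet := by
    conv_lhs => rw [← hbraid]
    rw [← Category.assoc, Category.assoc, bsym]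
  -- Step 4: nondegeneracy
  calc θ F = θ F ≫ (ρ_ F).inv ≫ (F ◁ δ) ≫ (α_ F F F).inv ≫ (bet ▷ F) ≫ (λ_ F).hom := by
        rw [z2, Category.comp_id]
    _ = (ρ_ F).inv ≫ (F ◁ δ) ≫ (α_ F F F).inv ≫ ((θ F ▷ F) ▷ F) ≫ (bet ▷ F) ≫ (λ_ F).hom := by
        rw [← Category.assoc, rightUnitor_inv_naturality, Category.assoc,
          ← Category.assoc (θ F ▷ 𝟙_ C), ← whisker_exchange, Category.assoc,
          ← Category.assoc (θ F ▷ (F ⊗ F)), associator_inv_naturality_left, Category.assoc]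
    _ = (ρ_ F).inv ≫ (F ◁ δ) ≫ (α_ F F F).inv ≫ (bet ▷ F) ≫ (λ_ F).hom := by
        rw [← Category.assoc ((θ F ▷ F) ▷ F), ← comp_whiskerRight, key]
    _ = 𝟙 F := z2
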